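/- Theorem 2 (first part, strict inequality): if N ≥ 2 and the squared amplitudes are not all equal (there exist i, j with (u i)² ≠ (u j)²), then for any two distinct positions w ≠ w' we have E[X_w² · X_{w'}²] < m₂². -/
import Mathlib


/-- Expectation of a real-valued random variable on the finite probability space
`Equiv.Perm (Fin N)` equipped with the uniform probability measure. -/
noncomputable def permExpect (N : ℕ) (f : Equiv.Perm (Fin N) → ℝ) : ℝ :=
  (∑ σ : Equiv.Perm (Fin N), f σ) / (Fintype.card (Equiv.Perm (Fin N)) : ℝ)

/-- Empirical `k`-th moment of the amplitude block `u`. -/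
noncomputable def empMoment (N : ℕ) (u : Fin N → ℝ) (k : ℕ) : ℝ :=
  (1 / (N : ℝ)) * ∑ i : Fin N, (u i) ^ k

/-- Theorem 2, first part (strict inequality): if the squared amplitudes are not all
equal, then for distinct positions `w ≠ w'`, `E[X_w² · X_{w'}²] < m₂²`. -/
theorem corr_second_second_lt (N : ℕ) (hN : 2 ≤ N) (u : Fin N → ℝ)
    (hne : ∃ i j : Fin N, (u i) ^ 2 ≠ (u j) ^ 2)
    (w w' : Fin N) (hww' : w ≠ w') :
    permExpect N (fun σ => (u (σ w)) ^ 2 * (u (σ w')) ^ 2)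
      < (empMoment N u 2) ^ 2 := by
  classical
  set a : Fin N → ℝ := fun i => u i ^ 2 with ha
  set S : ℝ := ∑ i, a i with hS
  set Q : ℝ := ∑ i, a i ^ 2 with hQ
  -- transitivity on ordered pairs of distinct points
  have htrans : ∀ i j : Fin N, i ≠ j →
      ∃ τ : Equiv.Perm (Fin N), τ w = i ∧ τ w' = j := by
    intro i j hij
    set s := Equiv.swap i w with hs
    have hsw : s w = i := Equiv.swap_apply_right i w
    have hc : s w' ≠ i := by
      intro h
      exact hww' (s.injective (hsw.trans h.symm))
    refine ⟨Equiv.swap j (s w') * s, ?_, ?_⟩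
    · simp only [Equiv.Perm.mul_apply, hsw]
      exact Equiv.swap_apply_of_ne_of_ne hij hc.symm
    · simp only [Equiv.Perm.mul_apply]
      exact Equiv.swap_apply_right j (s w')
  set T : ℕ :=
    (Finset.univ.filter fun σ : Equiv.Perm (Fin N) => σ w = w ∧ σ w' = w').card with hT
  have hfiber : ∀ i j : Fin N, i ≠ j →
      (Finset.univ.filter fun σ : Equiv.Perm (Fin N) => σ w = i ∧ σ w' = j).card = T := by
    intro i j hij
    obtain ⟨τ, hτw, hτw'⟩ := htrans i j hij
    apply Finset.card_bij' (fun σ _ => τ⁻¹ * σ) (fun σ _ => τ * σ)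
    · intro σ hσ
      simp only [Finset.mem_filter, Finset.mem_univ, true_and] at hσ ⊢
      refine ⟨?_, ?_⟩
      · rw [Equiv.Perm.mul_apply, hσ.1, ← hτw]; simp
      · rw [Equiv.Perm.mul_apply, hσ.2, ← hτw']; simp
    · intro σ hσ
      simp only [Finset.mem_filter, Finset.mem_univ, true_and] at hσ ⊢
      refine ⟨?_, ?_⟩
      · rw [Equiv.Perm.mul_apply, hσ.1, hτw]
      · rw [Equiv.Perm.mul_apply, hσ.2, hτw']
    · intro σ _; simp [← mul_assoc]
    · intro σ _; simp [← mul_assoc]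
  -- key identity: sums over permutations reduce to sums over distinct pairs
  have hkey : ∀ F : Fin N → Fin N → ℝ,
      ∑ σ : Equiv.Perm (Fin N), F (σ w) (σ w') =
        ∑ p ∈ Finset.univ.offDiag, (T : ℝ) * F p.1 p.2 := by
    intro F
    rw [← Finset.sum_fiberwise_of_maps_to
        (g := fun σ : Equiv.Perm (Fin N) => (σ w, σ w')) (t := Finset.univ.offDiag)
        (fun σ _ => Finset.mem_offDiag.mpr
          ⟨Finset.mem_univ _, Finset.mem_univ _, fun h => hww' (σ.injective h)⟩)
        (fun σ => F (σ w) (σ w'))]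
    apply Finset.sum_congr rfl
    intro p hp
    have hp' := (Finset.mem_offDiag.mp hp).2.2
    have hcongr : ∀ σ ∈ Finset.univ.filter
        (fun σ : Equiv.Perm (Fin N) => (σ w, σ w') = p),
        F (σ w) (σ w') = F p.1 p.2 := by
      intro σ hσ
      simp only [Finset.mem_filter, Prod.ext_iff] at hσ
      rw [hσ.2.1, hσ.2.2]
    rw [Finset.sum_congr rfl hcongr, Finset.sum_const, nsmul_eq_mul]
    congr 1
    have hcc : (Finset.univ.filter
        (fun σ : Equiv.Perm (Fin N) => (σ w, σ w') = p)).card = T := by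
      rw [← hfiber p.1 p.2 hp']
      congr 1
      ext σ
      simp [Prod.ext_iff]
    exact_mod_cast hcc
  have hTpos : 0 < T := Finset.card_pos.mpr ⟨1, by simp⟩
  have hTpos' : (0 : ℝ) < T := by exact_mod_cast hTpos
  set D : ℝ := ((Finset.univ : Finset (Fin N)).offDiag.card : ℝ) with hD
  have hDval : D = (N : ℝ) * (N : ℝ) - (N : ℝ) := by
    rw [hD, Finset.offDiag_card, Finset.card_univ, Fintype.card_fin]
    have hle : N ≤ N * N := Nat.le_mul_of_pos_left N (by omega)
    push_cast [Nat.cast_sub hle]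
    ring
  have hN0 : (0 : ℝ) < N := by positivity
  have hN2 : (2 : ℝ) ≤ N := by exact_mod_cast hN
  have hDpos : 0 < D := by rw [hDval]; nlinarith
  -- total count
  have hcount : (Fintype.card (Equiv.Perm (Fin N)) : ℝ) = D * (T : ℝ) := by
    have h1 := hkey (fun _ _ => (1 : ℝ))
    simp only [mul_one, Finset.sum_const, nsmul_eq_mul, Finset.card_univ] at h1
    rw [hD]
    exact_mod_cast h1
  set Soff : ℝ := ∑ p ∈ Finset.univ.offDiag, a p.1 * a p.2 with hSoff
  have hsum : ∑ σ : Equiv.Perm (Fin N), a (σ w) * a (σ w') = (T : ℝ) * Soff := by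
    rw [hkey (fun x y => a x * a y), hSoff, Finset.mul_sum]
  -- the expectation equals Soff / D
  have hE : permExpect N (fun σ => (u (σ w)) ^ 2 * (u (σ w')) ^ 2) = Soff / D := by
    unfold permExpect
    have hfeq : (fun σ : Equiv.Perm (Fin N) => (u (σ w)) ^ 2 * (u (σ w')) ^ 2)
        = fun σ => a (σ w) * a (σ w') := rfl
    rw [hfeq, hsum, hcount, mul_comm D (T : ℝ),
      mul_div_mul_left _ _ (ne_of_gt hTpos')]
  -- Soff = S^2 - Q
  have hSoffval : Soff = S ^ 2 - Q := by
    have h1 : ∑ p ∈ (Finset.univ ×ˢ Finset.univ : Finset (Fin N × Fin N)),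
        a p.1 * a p.2 = S ^ 2 := by
      rw [Finset.sum_product]
      have hrow : ∀ i : Fin N, ∑ j : Fin N, a i * a j = a i * S := by
        intro i; rw [← Finset.mul_sum, ← hS]
      rw [Finset.sum_congr rfl (fun i _ => hrow i), ← Finset.sum_mul, ← hS, sq]
    rw [← Finset.diag_union_offDiag (Finset.univ : Finset (Fin N)),
      Finset.sum_union (Finset.disjoint_diag_offDiag _), Finset.sum_diag] at h1
    have h2 : ∑ i : Fin N, a i * a i = Q := by
      rw [hQ]; exact Finset.sum_congr rfl fun i _ => (sq (a i)).symm
    rw [hSoff]; rw [h2] at h1; linarith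
  -- strict Cauchy-Schwarz: S^2 < N * Q
  have hid : ∑ i : Fin N, ∑ j : Fin N, (a i - a j) ^ 2
      = 2 * ((N : ℝ) * Q - S ^ 2) := by
    have hrow : ∀ i : Fin N, ∑ j : Fin N, (a i - a j) ^ 2
        = (N : ℝ) * a i ^ 2 - 2 * a i * S + Q := by
      intro i
      have hterm : ∀ j : Fin N, (a i - a j) ^ 2
          = a i ^ 2 - 2 * a i * a j + a j ^ 2 := fun j => by ring
      rw [Finset.sum_congr rfl (fun j _ => hterm j), Finset.sum_add_distrib,
        Finset.sum_sub_distrib, Finset.sum_const, Finset.card_univ, Fintype.card_fin,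
        nsmul_eq_mul, ← Finset.mul_sum, ← hS, ← hQ]
    rw [Finset.sum_congr rfl (fun i _ => hrow i), Finset.sum_add_distrib,
      Finset.sum_sub_distrib, ← Finset.mul_sum, ← hQ, Finset.sum_const,
      Finset.card_univ, Fintype.card_fin, nsmul_eq_mul]
    have h2s : ∑ i : Fin N, 2 * a i * S = 2 * S * S := by
      rw [Finset.sum_congr rfl
        (fun i (_ : i ∈ Finset.univ) => (by ring : 2 * a i * S = 2 * S * a i)),
        ← Finset.mul_sum, ← hS]
    rw [h2s]; ring
  have hpos : 0 < ∑ i : Fin N, ∑ j : Fin N, (a i - a j) ^ 2 := by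
    obtain ⟨i0, j0, hij⟩ := hne
    have hij' : a i0 - a j0 ≠ 0 := sub_ne_zero.mpr hij
    refine Finset.sum_pos' (fun i _ => Finset.sum_nonneg fun j _ => sq_nonneg _)
      ⟨i0, Finset.mem_univ _, Finset.sum_pos' (fun j _ => sq_nonneg _)
        ⟨j0, Finset.mem_univ _, by positivity⟩⟩
  have hCS : S ^ 2 < (N : ℝ) * Q := by nlinarith [hpos, hid]
  -- finish
  have hm : empMoment N u 2 = 1 / (N : ℝ) * S := rfl
  rw [hE, hm, hSoffval]
  have hrhs : (1 / (N : ℝ) * S) ^ 2 = S ^ 2 / ((N : ℝ) * (N : ℝ)) := by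
    rw [show ((N : ℝ) * (N : ℝ)) = (N : ℝ) ^ 2 by ring, mul_pow, div_pow, one_pow,
      one_div, inv_mul_eq_div]
  rw [hrhs, div_lt_div_iff₀ hDpos (by positivity)]
  rw [hDval]
  nlinarith [mul_pos hN0 (sub_pos.mpr hCS)]
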